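/- arXiv:2403.08415 — 2 statements merged into one kernel-verified Lean document; each statement's English description precedes it below -/
import Mathlib

section
/- For every n ≥ 1, every word d₁…d_n ∈ Ω_{σ₁…σ_n}, and every a ∈ ℝ, writing (x₁,y₁) = Φ^{σ₁…σ_n}_{d₁…d_n}(0,1) and (x₂,y₂) = Φ^{σ₁…σ_n}_{d₁…d_n}(1,0), one has y₂ − (M/N)x₂ = S^{σ₁…σ_n}_{d₁…d_n}(−M/N), y₁ − (M/N)x₁ = S^{σ₁…σ_n}_{d₁…d_n}(1), and Φ^{σ₁…σ_n}_{d₁…d_n}(F₀) ∩ L_a ≠ ∅ if and only if a ∈ S^{σ₁…σ_n}_{d₁…d_n}(J) = [y₂−(M/N)x₂, y₁−(M/N)x₁]. -/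
open Set Filter

noncomputable section

/-- The digit set Ω₀. -/
def Dig0 : Finset (ℤ × ℤ) := {(0,0),(0,1),(0,2),(1,0),(1,2),(2,0),(2,1),(2,2)}

/-- The digit set Ω₁. -/
def Dig1 : Finset (ℤ × ℤ) :=
  {(0,0),(0,1),(0,2),(0,3),(1,0),(1,3),(2,0),(2,1),(3,0),(3,1),(3,2),(3,3)}

/-- Ω indexed by a boolean (false = Ω₀, true = Ω₁). -/
def DigB : Bool → Finset (ℤ × ℤ)
  | false => Dig0
  | true => Dig1

/-- The contraction ratio denominator: 3 for the 0-system, 4 for the 1-system. -/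
def ratioB : Bool → ℝ
  | false => 3
  | true => 4

/-- Maximal digit for the symbolic space: 2 when σ_i = 0, 3 when σ_i = 1. -/
def capB : Bool → ℕ
  | false => 2
  | true => 3

/-- The maps Φ⁰_d (b = false) and Φ¹_d (b = true). -/
def Phi (b : Bool) (d : ℤ × ℤ) (p : ℝ × ℝ) : ℝ × ℝ :=
  ((p.1 + (d.1 : ℝ)) / ratioB b, (p.2 + (d.2 : ℝ)) / ratioB b)

/-- `cnt σ b k` = number of indices among the first k with σ-value b (i.e. n₀(k), n₁(k)). -/
def cnt (σ : ℕ → Bool) (b : Bool) (k : ℕ) : ℕ :=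
  ((Finset.range k).filter (fun i => σ i = b)).card

/-- The scale 3^{n₀(k)}·4^{n₁(k)}. -/
def sc (σ : ℕ → Bool) (k : ℕ) : ℝ := 3 ^ cnt σ false k * 4 ^ cnt σ true k

/-- The unit square F₀ = [0,1]². -/
def F0set : Set (ℝ × ℝ) := Set.Icc (0:ℝ) 1 ×ˢ Set.Icc (0:ℝ) 1

/-- The sets F_j of the Moran construction (σ j is the paper's σ_{j+1}). -/
def Fiter (σ : ℕ → Bool) : ℕ → Set (ℝ × ℝ)
  | 0 => F0set
  | j + 1 => ⋃ d ∈ DigB (σ j), Phi (σ j) d '' Fiter σ j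

/-- The Sierpinski carpet with Moran structure F_σ = ⋂_{j ≥ 1} F_j. -/
def FMoran (σ : ℕ → Bool) : Set (ℝ × ℝ) := ⋂ j : ℕ, Fiter σ (j + 1)

/-- The line L_a : y = (M/N)x + a. -/
def Lline (M N : ℕ) (a : ℝ) : Set (ℝ × ℝ) := {p | p.2 = (M : ℝ) / (N : ℝ) * p.1 + a}

/-- The interval J = [-M/N, 1]. -/
def Jset (M N : ℕ) : Set ℝ := Set.Icc (-(M : ℝ) / (N : ℝ)) 1

/-- The expanding maps T⁰_d (b = false) and T¹_d (b = true). -/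
def Tmap (M N : ℕ) (b : Bool) (d : ℤ × ℤ) (x : ℝ) : ℝ :=
  ratioB b * x + (d.1 : ℝ) * ((M : ℝ) / (N : ℝ)) - (d.2 : ℝ)

/-- The contracting maps S⁰_d (b = false) and S¹_d (b = true), inverses of T. -/
def Smap (M N : ℕ) (b : Bool) (d : ℤ × ℤ) (x : ℝ) : ℝ :=
  (x - (d.1 : ℝ) * ((M : ℝ) / (N : ℝ)) + (d.2 : ℝ)) / ratioB b

/-- Composition Φ^{σ₁…σ_n}_{d₁…d_n} = Φ^{σ₁}_{d₁} ∘ ⋯ ∘ Φ^{σ_n}_{d_n}. -/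
def PhiComp (σ : ℕ → Bool) {n : ℕ} (w : Fin n → ℤ × ℤ) : ℝ × ℝ → ℝ × ℝ :=
  (List.ofFn (fun i : Fin n => Phi (σ i.1) (w i))).foldr (· ∘ ·) id

/-- Composition S^{σ₁…σ_n}_{d₁…d_n} = S^{σ₁}_{d₁} ∘ ⋯ ∘ S^{σ_n}_{d_n}. -/
def Scomp (M N : ℕ) (σ : ℕ → Bool) {n : ℕ} (w : Fin n → ℤ × ℤ) : ℝ → ℝ :=
  (List.ofFn (fun i : Fin n => Smap M N (σ i.1) (w i))).foldr (· ∘ ·) id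

/-- Composition T^{σ₁…σ_n}_{d₁…d_n} = T^{σ_n}_{d_n} ∘ ⋯ ∘ T^{σ₁}_{d₁}. -/
def Tcomp (M N : ℕ) (σ : ℕ → Bool) {n : ℕ} (w : Fin n → ℤ × ℤ) : ℝ → ℝ :=
  (List.ofFn (fun i : Fin n => Tmap M N (σ i.1) (w i))).foldl (fun g f => f ∘ g) id

/-- N_n^σ(a): the number of admissible words of length n whose level-n square meets L_a. -/
def Ncount (M N : ℕ) (σ : ℕ → Bool) (n : ℕ) (a : ℝ) : ℕ :=
  Set.ncard {w : Fin n → ℤ × ℤ |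
    (∀ i, w i ∈ DigB (σ i.1)) ∧ (PhiComp σ w '' F0set ∩ Lline M N a).Nonempty}

/-- Γ_x = {x + i/N : i ∈ ℤ} ∩ J. -/
def GammaSet (M N : ℕ) (x : ℝ) : Set ℝ :=
  {y | (∃ i : ℤ, y = x + (i : ℝ) / (N : ℝ)) ∧ y ∈ Jset M N}

/-- The matrix A₀^j (1-based indices p, q correspond to the Fin values plus one). -/
def A0mat (M N : ℕ) (j : ℕ) : Matrix (Fin (N + M)) (Fin (N + M)) ℝ :=
  Matrix.of fun p q =>
    ((Dig0.filter (fun d => d.1 * (M : ℤ) - d.2 * (N : ℤ) =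
        2 * (M : ℤ) + 2 + ((q : ℕ) + 1 : ℤ) - 3 * ((p : ℕ) + 1 : ℤ) - (j : ℤ))).card : ℝ)

/-- The matrix A₁^j. -/
def A1mat (M N : ℕ) (j : ℕ) : Matrix (Fin (N + M)) (Fin (N + M)) ℝ :=
  Matrix.of fun p q =>
    ((Dig1.filter (fun d => d.1 * (M : ℤ) - d.2 * (N : ℤ) =
        3 * (M : ℤ) + 3 + ((q : ℕ) + 1 : ℤ) - 4 * ((p : ℕ) + 1 : ℤ) - (j : ℤ))).card : ℝ)

/-- A^j_b : A₀^j when b = false, A₁^j when b = true. -/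
def Amat (M N : ℕ) : Bool → ℕ → Matrix (Fin (N + M)) (Fin (N + M)) ℝ
  | false => A0mat M N
  | true => A1mat M N

/-- The ordered matrix product A^{ξ₁}_{σ₁} A^{ξ₂}_{σ₂} ⋯ A^{ξ_k}_{σ_k}. -/
def Aprod (M N : ℕ) (σ : ℕ → Bool) (ξ : ℕ → ℕ) (k : ℕ) :
    Matrix (Fin (N + M)) (Fin (N + M)) ℝ :=
  ((List.range k).map (fun i => Amat M N (σ i) (ξ i))).prod

/-- The matrix B_b(x), built from a chosen increasing enumeration Γe of the sets Γ_x. -/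
def Bmat (M N : ℕ) (Γe : ℝ → Fin (N + M) → ℝ) (b : Bool) (x : ℝ) :
    Matrix (Fin (N + M)) (Fin (N + M)) ℝ :=
  Matrix.of fun p q =>
    (Set.ncard {d : ℤ × ℤ | d ∈ DigB b ∧ Tmap M N b d (Γe x p) = Γe (ratioB b * x) q} : ℝ)

/-- ‖X‖: the sum of all entries of a matrix. -/
def mnorm {n : ℕ} (X : Matrix (Fin n) (Fin n) ℝ) : ℝ := ∑ p, ∑ q, X p q

/-- The least number of sets of diameter at most δ needed to cover E. -/
def coverNum (E : Set (ℝ × ℝ)) (δ : ℝ) : ℕ :=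
  sInf {n : ℕ | ∃ S : Finset (Set (ℝ × ℝ)), S.card = n ∧
    (∀ s ∈ S, EMetric.diam s ≤ ENNReal.ofReal δ) ∧ E ⊆ ⋃ s ∈ S, s}

/-- The upper box dimension. -/
def uboxDim (E : Set (ℝ × ℝ)) : ℝ :=
  limsup (fun δ : ℝ => Real.log (coverNum E δ : ℝ) / (-Real.log δ))
    (nhdsWithin (0 : ℝ) (Set.Ioi 0))

/-- The lower box dimension. -/
def lboxDim (E : Set (ℝ × ℝ)) : ℝ :=
  liminf (fun δ : ℝ => Real.log (coverNum E δ : ℝ) / (-Real.log δ))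
    (nhdsWithin (0 : ℝ) (Set.Ioi 0))

/-- The finite words Σ_σ^k. -/
def wordsF (σ : ℕ → Bool) (k : ℕ) : Finset (Fin k → ℕ) :=
  Fintype.piFinset fun i => Finset.range (capB (σ i.1) + 1)

/-- A_ω for a finite word ω ∈ Σ_σ^k. -/
def AprodW (M N : ℕ) (σ : ℕ → Bool) {k : ℕ} (ω : Fin k → ℕ) :
    Matrix (Fin (N + M)) (Fin (N + M)) ℝ :=
  (List.ofFn (fun i : Fin k => Amat M N (σ i.1) (ω i))).prod

/-- The pressure function P_A(q). -/
def PA (M N : ℕ) (σ : ℕ → Bool) (q : ℝ) : ℝ :=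
  limsup (fun k : ℕ =>
    Real.log (∑ ω ∈ wordsF σ k, mnorm (AprodW M N σ ω) ^ q) / (k : ℝ)) atTop

/-- The level set E(α) of intercepts whose box-dimension limit equals α. -/
def Eset (M N : ℕ) (σ : ℕ → Bool) (α : ℝ) : Set ℝ :=
  {a | a ∈ Jset M N ∧ (∀ k : ℕ, ¬∃ m : ℤ, sc σ k * (N : ℝ) * a = (m : ℝ)) ∧
    ∃ κ : ℕ, (1 ≤ κ ∧ κ ≤ N + M) ∧ ∃ ξ : ℕ → ℕ, (∀ i, ξ i ≤ capB (σ i)) ∧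
      a = (-(M : ℝ) - 1 + (κ : ℝ)) / (N : ℝ) +
          1 / (N : ℝ) * ∑' i : ℕ, (ξ i : ℝ) / sc σ (i + 1) ∧
      Tendsto (fun k : ℕ => Real.log (mnorm (Aprod M N σ ξ k)) /
        ((cnt σ false k : ℝ) * Real.log 3 + (cnt σ true k : ℝ) * Real.log 4))
        atTop (nhds α)}
lemma ratio_pos (b : Bool) : 0 < ratioB b := by cases b <;> norm_num [ratioB]

lemma pi_phi (M N : ℕ) (b : Bool) (d : ℤ × ℤ) (p : ℝ × ℝ) :
    (Phi b d p).2 - (M : ℝ) / N * (Phi b d p).1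
      = Smap M N b d (p.2 - (M : ℝ) / N * p.1) := by
  have hr : (ratioB b) ≠ 0 := (ratio_pos b).ne'
  simp only [Phi, Smap]
  generalize (M : ℝ) / (N : ℝ) = m
  field_simp
  ring

lemma phiComp_succ (σ : ℕ → Bool) {n : ℕ} (w : Fin (n + 1) → ℤ × ℤ) :
    PhiComp σ w = Phi (σ 0) (w 0) ∘ PhiComp (fun k => σ (k + 1)) (fun i => w i.succ) := by
  simp [PhiComp, List.ofFn_succ]

lemma scomp_succ (M N : ℕ) (σ : ℕ → Bool) {n : ℕ} (w : Fin (n + 1) → ℤ × ℤ) :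
    Scomp M N σ w = Smap M N (σ 0) (w 0) ∘ Scomp M N (fun k => σ (k + 1)) (fun i => w i.succ) := by
  simp [Scomp, List.ofFn_succ]

lemma pi_comp (M N : ℕ) (σ : ℕ → Bool) : ∀ {n : ℕ} (w : Fin n → ℤ × ℤ) (p : ℝ × ℝ),
    (PhiComp σ w p).2 - (M : ℝ) / N * (PhiComp σ w p).1
      = Scomp M N σ w (p.2 - (M : ℝ) / N * p.1) := by
  intro n
  induction n generalizing σ with
  | zero => intro w p; simp [PhiComp, Scomp]
  | succ n ih =>
    intro w p
    rw [phiComp_succ, scomp_succ]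
    simp only [Function.comp_apply]
    rw [pi_phi, ih]

lemma scomp_affine (M N : ℕ) (σ : ℕ → Bool) : ∀ {n : ℕ} (w : Fin n → ℤ × ℤ),
    ∃ R c : ℝ, 0 < R ∧ ∀ x, Scomp M N σ w x = x / R + c := by
  intro n
  induction n generalizing σ with
  | zero => exact fun w => ⟨1, 0, one_pos, fun x => by simp [Scomp]⟩
  | succ n ih =>
    intro w
    obtain ⟨R, c, hR, hRc⟩ := ih (fun k => σ (k + 1)) (fun i => w i.succ)
    have hr := ratio_pos (σ 0)
    refine ⟨R * ratioB (σ 0), (c - ((w 0).1 : ℝ) * ((M : ℝ) / N) + ((w 0).2 : ℝ)) / ratioB (σ 0),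
      by positivity, fun x => ?_⟩
    rw [scomp_succ]
    simp only [Function.comp_apply, hRc, Smap]
    generalize (M : ℝ) / (N : ℝ) = m
    field_simp
    ring

lemma affine_image_Icc (R c : ℝ) (hR : 0 < R) (u v : ℝ) :
    (fun x : ℝ => x / R + c) '' Set.Icc u v = Set.Icc (u / R + c) (v / R + c) := by
  ext y
  constructor
  · rintro ⟨x, ⟨h1, h2⟩, rfl⟩
    dsimp only
    constructor <;> gcongr
  · rintro ⟨h1, h2⟩
    refine ⟨(y - c) * R, ⟨?_, ?_⟩, by field_simp; ring⟩
    · calc u = u / R * R := by field_simp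
        _ ≤ (y - c) * R := by
            apply mul_le_mul_of_nonneg_right _ hR.le
            have := sub_le_sub_right h1 c
            simpa using this
    · calc (y - c) * R ≤ v / R * R := by
            apply mul_le_mul_of_nonneg_right _ hR.le
            have := sub_le_sub_right h2 c
            simpa using this
        _ = v := by field_simp

lemma pi_F0 (M N : ℕ) (hN : 1 ≤ N) :
    (fun p : ℝ × ℝ => p.2 - (M : ℝ) / N * p.1) '' F0set = Jset M N := by
  have hm : (0 : ℝ) ≤ (M : ℝ) / N := by positivity
  ext t
  constructor
  · rintro ⟨⟨x, y⟩, ⟨⟨hx0, hx1⟩, hy0, hy1⟩, rfl⟩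
    constructor
    · rw [neg_div]
      nlinarith
    · nlinarith
  · rintro ⟨h1, h2⟩
    rw [neg_div] at h1
    have hm1 : (0 : ℝ) < 1 + (M : ℝ) / N := by linarith
    refine ⟨((1 - t) / (1 + (M : ℝ) / N), (t + (M : ℝ) / N) / (1 + (M : ℝ) / N)),
      ⟨⟨?_, ?_⟩, ?_, ?_⟩, ?_⟩
    · apply div_nonneg _ hm1.le; linarith
    · rw [div_le_one hm1]; linarith
    · apply div_nonneg _ hm1.le; linarith
    · rw [div_le_one hm1]; linarith
    · show _ - _ * _ = t
      field_simp
      ring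
/-- corner projections and the intersection criterion for a level-n square. -/
theorem stmt4 (σ : ℕ → Bool) (M N : ℕ) (hN : 1 ≤ N) (hMN : Nat.Coprime M N)
    (n : ℕ) (hn : 1 ≤ n) (w : Fin n → ℤ × ℤ) (hw : ∀ i, w i ∈ DigB (σ i.1)) (a : ℝ) :
    (PhiComp σ w ((1 : ℝ), (0 : ℝ))).2 -
        (M : ℝ) / (N : ℝ) * (PhiComp σ w ((1 : ℝ), (0 : ℝ))).1 =
      Scomp M N σ w (-(M : ℝ) / (N : ℝ)) ∧
    (PhiComp σ w ((0 : ℝ), (1 : ℝ))).2 -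
        (M : ℝ) / (N : ℝ) * (PhiComp σ w ((0 : ℝ), (1 : ℝ))).1 =
      Scomp M N σ w 1 ∧
    Scomp M N σ w '' Jset M N =
      Set.Icc
        ((PhiComp σ w ((1 : ℝ), (0 : ℝ))).2 -
          (M : ℝ) / (N : ℝ) * (PhiComp σ w ((1 : ℝ), (0 : ℝ))).1)
        ((PhiComp σ w ((0 : ℝ), (1 : ℝ))).2 -
          (M : ℝ) / (N : ℝ) * (PhiComp σ w ((0 : ℝ), (1 : ℝ))).1) ∧
    ((PhiComp σ w '' F0set ∩ Lline M N a).Nonempty ↔ a ∈ Scomp M N σ w '' Jset M N) := by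
  have h1 : (PhiComp σ w ((1 : ℝ), (0 : ℝ))).2 -
      (M : ℝ) / (N : ℝ) * (PhiComp σ w ((1 : ℝ), (0 : ℝ))).1
        = Scomp M N σ w (-(M : ℝ) / (N : ℝ)) := by
    rw [pi_comp M N σ w ((1 : ℝ), (0 : ℝ))]
    congr 1
    ring
  have h2 : (PhiComp σ w ((0 : ℝ), (1 : ℝ))).2 -
      (M : ℝ) / (N : ℝ) * (PhiComp σ w ((0 : ℝ), (1 : ℝ))).1
        = Scomp M N σ w 1 := by
    rw [pi_comp M N σ w ((0 : ℝ), (1 : ℝ))]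
    congr 1
    ring
  obtain ⟨R, c, hR, hRc⟩ := scomp_affine M N σ w
  have hfun : Scomp M N σ w = fun x : ℝ => x / R + c := funext hRc
  have himg : Scomp M N σ w '' Jset M N
      = Set.Icc (Scomp M N σ w (-(M : ℝ) / (N : ℝ))) (Scomp M N σ w 1) := by
    rw [Jset, hfun, affine_image_Icc R c hR]
  refine ⟨h1, h2, by rw [h1, h2, himg], ?_⟩
  constructor
  · rintro ⟨q, ⟨p, hp, rfl⟩, hq⟩
    refine ⟨p.2 - (M : ℝ) / N * p.1, ?_, ?_⟩
    · rw [← pi_F0 M N hN]; exact ⟨p, hp, rfl⟩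
    · rw [← pi_comp M N σ w p]
      have : (PhiComp σ w p).2 = (M : ℝ) / N * (PhiComp σ w p).1 + a := hq
      linarith
  · rintro ⟨t, ht, hst⟩
    rw [← pi_F0 M N hN] at ht
    obtain ⟨p, hp, rfl⟩ := ht
    refine ⟨PhiComp σ w p, ⟨p, hp, rfl⟩, ?_⟩
    have := pi_comp M N σ w p
    show (PhiComp σ w p).2 = (M : ℝ) / N * (PhiComp σ w p).1 + a
    rw [← hst] at *
    linarith
end
end

section
/- Assume the frequencies n₀ = lim_{k→∞} n₀(k)/k and n₁ = lim_{k→∞} n₁(k)/k exist. For every α ∈ ℝ, dim_H(E(α)) ≤ dim_H({x ∈ Σ_σ : λ_A(x) exists and equals α·(n₀·log 3 + n₁·log 4)}). -/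
open Set Filter

noncomputable section

lemma cnt_succ (σ : ℕ → Bool) (b : Bool) (k : ℕ) :
    cnt σ b (k+1) = cnt σ b k + if σ k = b then 1 else 0 := by
  unfold cnt
  rw [Finset.range_add_one, Finset.filter_insert]
  split
  · rw [Finset.card_insert_of_notMem (by simp)]
  · simp

lemma cnt_add (σ : ℕ → Bool) (k : ℕ) : cnt σ false k + cnt σ true k = k := by
  classical
  have h := Finset.card_filter_add_card_filter_not (s := Finset.range k)
    (p := fun i => σ i = false)
  simp only [Bool.not_eq_false, Finset.card_range] at h
  simpa [cnt] using h

lemma sc_pos (σ : ℕ → Bool) (k : ℕ) : 0 < sc σ k := by unfold sc; positivity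

lemma sc_succ (σ : ℕ → Bool) (k : ℕ) : sc σ (k+1) = sc σ k * ratioB (σ k) := by
  cases h : σ k <;> simp [sc, cnt_succ, h, ratioB, pow_succ] <;> ring

lemma sc_succ_ge (σ : ℕ → Bool) (k : ℕ) : sc σ k * 3 ≤ sc σ (k+1) := by
  rw [sc_succ]
  have := sc_pos σ k
  cases h : σ k <;> simp [ratioB] <;> nlinarith

lemma sc_mul_le (σ : ℕ → Bool) (m j : ℕ) : sc σ m * 3 ^ j ≤ sc σ (m + j) := by
  induction j with
  | zero => simp
  | succ j ih =>
      calc sc σ m * 3 ^ (j+1) = sc σ m * 3 ^ j * 3 := by ring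
        _ ≤ sc σ (m + j) * 3 := by nlinarith
        _ ≤ sc σ (m + j + 1) := sc_succ_ge σ (m + j)

lemma sc_ge (σ : ℕ → Bool) (k : ℕ) : (3:ℝ) ^ k ≤ sc σ k := by
  have := sc_mul_le σ 0 k
  simpa [sc, cnt] using this

lemma capB_le (b : Bool) : capB b ≤ 3 := by cases b <;> simp [capB]

lemma summable_digit (σ : ℕ → Bool) (ξ : ℕ → ℕ) (hξ : ∀ i, (ξ i : ℝ) ≤ 3) :
    Summable (fun i => (ξ i : ℝ) / sc σ (i + 1)) := by
  have hg : Summable (fun i : ℕ => (1/3 : ℝ) ^ i) :=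
    summable_geometric_of_lt_one (by norm_num) (by norm_num)
  refine Summable.of_nonneg_of_le (fun i => div_nonneg (Nat.cast_nonneg _) (sc_pos σ _).le) (fun i => ?_) hg
  have h1 : (3:ℝ) ^ (i+1) ≤ sc σ (i+1) := sc_ge σ (i+1)
  have h2 : (0:ℝ) < 3 ^ (i+1) := by positivity
  have h3 : (0:ℝ) < sc σ (i+1) := sc_pos _ _
  have hx : (0:ℝ) ≤ (ξ i : ℝ) := Nat.cast_nonneg _
  calc (ξ i : ℝ) / sc σ (i+1) ≤ 3 / 3 ^ (i+1) := by gcongr; exact hξ i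
      _ = (1/3:ℝ) ^ i := by rw [pow_succ, div_pow, one_pow]; field_simp

lemma diff_bound (σ : ℕ → Bool) (ξ η : ℕ → ℕ) (hξ : ∀ i, (ξ i : ℝ) ≤ 3)
    (hη : ∀ i, (η i : ℝ) ≤ 3) (m : ℕ) (hagree : ∀ i < m, ξ i = η i) :
    |∑' i, (ξ i : ℝ) / sc σ (i+1) - ∑' i, (η i : ℝ) / sc σ (i+1)|
      ≤ (9/2) * (sc σ (m+1))⁻¹ := by
  have sξ := summable_digit σ ξ hξ
  have sη := summable_digit σ η hη
  set t : ℕ → ℝ := fun i => (ξ i : ℝ) / sc σ (i+1) - (η i : ℝ) / sc σ (i+1) with ht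
  have st : Summable t := sξ.sub sη
  have h1 : ∑' i, (ξ i : ℝ) / sc σ (i+1) - ∑' i, (η i : ℝ) / sc σ (i+1) = ∑' i, t i :=
    (Summable.tsum_sub sξ sη).symm
  have h2 : ∑ i ∈ Finset.range m, t i + ∑' i, t (i + m) = ∑' i, t i :=
    Summable.sum_add_tsum_nat_add m st
  have h3 : ∑ i ∈ Finset.range m, t i = 0 := by
    apply Finset.sum_eq_zero
    intro i hi
    have := hagree i (Finset.mem_range.mp hi)
    simp [ht, this]
  have habs : ∀ j : ℕ, |t (j + m)| ≤ 3 / sc σ (m+1) * (1/3 : ℝ) ^ j := by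
    intro j
    have hsc : sc σ (m+1) * 3 ^ j ≤ sc σ (j + m + 1) := by
      have := sc_mul_le σ (m+1) j
      rwa [show m + 1 + j = j + m + 1 by omega] at this
    have hS : (0:ℝ) < sc σ (m+1) := sc_pos _ _
    have hS2 : (0:ℝ) < sc σ (j+m+1) := sc_pos _ _
    have heq : |t (j + m)| = |(ξ (j+m) : ℝ) - (η (j+m) : ℝ)| / sc σ (j+m+1) := by
      rw [ht]
      simp only []
      rw [div_sub_div_same, abs_div, abs_of_pos hS2]
    have hnum : |(ξ (j+m) : ℝ) - (η (j+m) : ℝ)| ≤ 3 := by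
      rw [abs_sub_le_iff]
      have h4 := hξ (j+m); have h5 := hη (j+m)
      have h6 : (0:ℝ) ≤ (ξ (j+m) : ℝ) := Nat.cast_nonneg _
      have h7 : (0:ℝ) ≤ (η (j+m) : ℝ) := Nat.cast_nonneg _
      constructor <;> linarith
    rw [heq]
    calc |(ξ (j+m) : ℝ) - (η (j+m) : ℝ)| / sc σ (j+m+1)
        ≤ 3 / (sc σ (m+1) * 3 ^ j) := div_le_div₀ (by norm_num) hnum (by positivity) hsc
      _ = 3 / sc σ (m+1) * (1/3 : ℝ) ^ j := by
          rw [div_pow, one_pow, div_mul_div_comm, mul_one]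
  have sabs : Summable (fun j => |t (j + m)|) :=
    ((summable_nat_add_iff m).mpr st).abs
  have sgeo : Summable (fun j : ℕ => 3 / sc σ (m+1) * (1/3 : ℝ) ^ j) :=
    (summable_geometric_of_lt_one (by norm_num) (by norm_num)).mul_left _
  have h4 : |∑' j, t (j + m)| ≤ 3 / sc σ (m+1) * (3/2) := by
    calc |∑' j, t (j + m)| ≤ ∑' j, |t (j + m)| := by
          simpa using norm_tsum_le_tsum_norm (f := fun j => t (j + m)) (by simpa using sabs)
      _ ≤ ∑' j : ℕ, 3 / sc σ (m+1) * (1/3 : ℝ) ^ j := Summable.tsum_le_tsum habs sabs sgeo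
      _ = 3 / sc σ (m+1) * (3/2) := by
          rw [tsum_mul_left, tsum_geometric_of_lt_one (by norm_num) (by norm_num)]
          norm_num
  rw [h1, ← h2, h3, zero_add]
  calc |∑' j, t (j + m)| ≤ 3 / sc σ (m+1) * (3/2) := h4
    _ = (9/2) * (sc σ (m+1))⁻¹ := by rw [div_eq_mul_inv]; ring


lemma lip_aux (σ : ℕ → Bool) (N : ℕ) (hN : 1 ≤ N) (c : ℝ)
    (X : Type) [MetricSpace X] (e : X → ℕ → ℕ)
    (hcap : ∀ x i, (e x i : ℝ) ≤ 3)
    (hdist : ∀ x y : X, x ≠ y → dist x y = (sc σ (sInf {i : ℕ | e x i ≠ e y i} + 1))⁻¹) :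
    LipschitzWith 5 (fun x : X => c + 1/(N:ℝ) * ∑' i, (e x i : ℝ) / sc σ (i+1)) := by
  apply LipschitzWith.of_dist_le_mul
  intro x y
  rcases eq_or_ne x y with rfl | hxy
  · simp
  set m := sInf {i : ℕ | e x i ≠ e y i} with hm
  have hagree : ∀ i < m, e x i = e y i := by
    intro i hi
    by_contra h
    exact absurd (Nat.notMem_of_lt_sInf hi) (by simpa using h)
  have hb := diff_bound σ (e x) (e y) (hcap x) (hcap y) m hagree
  have hS : (0:ℝ) < sc σ (m+1) := sc_pos _ _
  have hN1 : (1:ℝ) ≤ (N:ℝ) := by exact_mod_cast hN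
  rw [hdist x y hxy, ← hm, Real.dist_eq]
  have heq : c + 1/(N:ℝ) * ∑' i, (e x i : ℝ) / sc σ (i+1)
      - (c + 1/(N:ℝ) * ∑' i, (e y i : ℝ) / sc σ (i+1))
      = 1/(N:ℝ) * (∑' i, (e x i : ℝ) / sc σ (i+1) - ∑' i, (e y i : ℝ) / sc σ (i+1)) := by
    ring
  rw [heq, abs_mul, abs_of_nonneg (by positivity : (0:ℝ) ≤ 1/(N:ℝ))]
  have h1N : 1/(N:ℝ) ≤ 1 := by
    rw [div_le_one (by linarith)]; linarith
  calc 1/(N:ℝ) * |∑' i, (e x i : ℝ) / sc σ (i+1) - ∑' i, (e y i : ℝ) / sc σ (i+1)|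
      ≤ 1 * ((9/2) * (sc σ (m+1))⁻¹) :=
        mul_le_mul h1N hb (abs_nonneg _) (by norm_num)
    _ ≤ 5 * (sc σ (m+1))⁻¹ := by
        have h2 : (0:ℝ) ≤ (sc σ (m+1))⁻¹ := by positivity
        nlinarith
    _ = ((5:NNReal):ℝ) * (sc σ (m+1))⁻¹ := by push_cast; norm_num

lemma tendsto_aux (σ : ℕ → Bool) (n₀ n₁ α : ℝ) (L : ℕ → ℝ)
    (h0 : Tendsto (fun k : ℕ => (cnt σ false k : ℝ) / (k : ℝ)) atTop (nhds n₀))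
    (h1 : Tendsto (fun k : ℕ => (cnt σ true k : ℝ) / (k : ℝ)) atTop (nhds n₁))
    (hten : Tendsto (fun k : ℕ => L k /
      ((cnt σ false k : ℝ) * Real.log 3 + (cnt σ true k : ℝ) * Real.log 4)) atTop (nhds α)) :
    Tendsto (fun k : ℕ => L k / (k : ℝ)) atTop
      (nhds (α * (n₀ * Real.log 3 + n₁ * Real.log 4))) := by
  set D : ℕ → ℝ := fun k =>
    (cnt σ false k : ℝ) * Real.log 3 + (cnt σ true k : ℝ) * Real.log 4 with hD
  have hDk : Tendsto (fun k : ℕ => D k / (k : ℝ)) atTop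
      (nhds (n₀ * Real.log 3 + n₁ * Real.log 4)) := by
    have h := (h0.mul_const (Real.log 3)).add (h1.mul_const (Real.log 4))
    refine h.congr fun k => ?_
    simp only [hD]
    ring
  refine (hten.mul hDk).congr' ?_
  filter_upwards [eventually_ge_atTop 1] with k hk
  have hk0 : (0:ℝ) < (k:ℝ) := by exact_mod_cast hk
  have hDpos : 0 < D k := by
    have hsum : ((cnt σ false k : ℝ) + (cnt σ true k : ℝ)) = (k : ℝ) := by
      exact_mod_cast cnt_add σ k
    have l3 : 0 < Real.log 3 := Real.log_pos (by norm_num)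
    have l34 : Real.log 3 ≤ Real.log 4 := Real.log_le_log (by norm_num) (by norm_num)
    have c0 : (0:ℝ) ≤ (cnt σ false k : ℝ) := Nat.cast_nonneg _
    have c1 : (0:ℝ) ≤ (cnt σ true k : ℝ) := Nat.cast_nonneg _
    have hkl : (k:ℝ) * Real.log 3 ≤ D k := by
      simp only [hD]
      nlinarith
    nlinarith
  field_simp
  exact mul_div_cancel_right₀ (L k) hDpos.ne'

/-- dim_H E(α) is at most the dimension of the corresponding Lyapunov level set
in the symbolic space Σ_σ (represented by an abstract metric space X with coding map e). -/
theorem stmt15 (σ : ℕ → Bool) (M N : ℕ) (hN : 1 ≤ N) (hMN : Nat.Coprime M N)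
    (n₀ n₁ : ℝ)
    (h0 : Tendsto (fun k : ℕ => (cnt σ false k : ℝ) / (k : ℝ)) atTop (nhds n₀))
    (h1 : Tendsto (fun k : ℕ => (cnt σ true k : ℝ) / (k : ℝ)) atTop (nhds n₁))
    (X : Type) [MetricSpace X] (e : X → ℕ → ℕ)
    (hinj : Function.Injective e)
    (hrange : Set.range e = {x : ℕ → ℕ | ∀ i, x i ≤ capB (σ i)})
    (hdist : ∀ x y : X, x ≠ y →
      dist x y = (sc σ (sInf {i : ℕ | e x i ≠ e y i} + 1))⁻¹)
    (α : ℝ) :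
    dimH (Eset M N σ α) ≤
      dimH {x : X | Tendsto (fun k : ℕ => Real.log (mnorm (Aprod M N σ (e x) k)) / (k : ℝ))
        atTop (nhds (α * (n₀ * Real.log 3 + n₁ * Real.log 4)))} := by
  
  have hcap3 : ∀ x i, (e x i : ℝ) ≤ 3 := by
    intro x i
    have hx : e x ∈ Set.range e := ⟨x, rfl⟩
    rw [hrange] at hx
    exact_mod_cast le_trans (hx i) (capB_le (σ i))
  set LS := {x : X | Tendsto (fun k : ℕ => Real.log (mnorm (Aprod M N σ (e x) k)) / (k : ℝ))
        atTop (nhds (α * (n₀ * Real.log 3 + n₁ * Real.log 4)))} with hLS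
  set f : ℕ → X → ℝ := fun κ x =>
    (-(M : ℝ) - 1 + (κ : ℝ)) / (N : ℝ) + 1/(N:ℝ) * ∑' i, (e x i : ℝ) / sc σ (i+1) with hf
  have hsub : Eset M N σ α ⊆ ⋃ κ : ℕ, f κ '' LS := by
    rintro a ⟨-, -, κ, -, ξ, hξcap, hrep, hten⟩
    have hmem : ξ ∈ Set.range e := by rw [hrange]; exact hξcap
    obtain ⟨x, hx⟩ := hmem
    refine mem_iUnion.2 ⟨κ, x, ?_, ?_⟩
    · show Tendsto _ atTop _
      rw [hx]
      exact tendsto_aux σ n₀ n₁ α _ h0 h1 hten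
    · simp only [hf, hx]
      rw [hrep]
  calc dimH (Eset M N σ α) ≤ dimH (⋃ κ : ℕ, f κ '' LS) := dimH_mono hsub
    _ = ⨆ κ : ℕ, dimH (f κ '' LS) := dimH_iUnion _
    _ ≤ dimH LS := iSup_le fun κ =>
        (lip_aux σ N hN _ X e hcap3 hdist).dimH_image_le LS
end
end
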